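/- The curves L₄^{1,2}: M₁ = ±(2/(3√3))(1 + M₂)^{3/2} (for M₂ > 1/3) are tangent to the curve L^-_{π/2}: M₁² = (4/27)M₂(M₂-3)² at the points (M₁, M₂) = (±16/27, 1/3): at M₂ = 1/3 the two curves meet, with equal values and equal first derivatives dM₁/dM₂, but different second derivatives (quadratic tangency). -/

import Mathlib

open Real Filter

private lemma sqrt3_sq : Real.sqrt 3 ^ 2 = 3 := Real.sq_sqrt (by norm_num)
private lemma sqrt3_pos : 0 < Real.sqrt 3 := Real.sqrt_pos.2 (by norm_num)

private lemma sqrt_third : Real.sqrt (1/3) = Real.sqrt 3 / 3 := by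
  rw [show (1:ℝ)/3 = (Real.sqrt 3 / 3)^2 by rw [div_pow, sqrt3_sq]; norm_num]
  exact Real.sqrt_sq (by positivity)

private lemma sqrt_fourthirds : Real.sqrt (1 + 1/3 : ℝ) = 2 * Real.sqrt 3 / 3 := by
  rw [show (1:ℝ) + 1/3 = (2 * Real.sqrt 3 / 3)^2 by
    rw [div_pow, mul_pow, sqrt3_sq]; norm_num]
  exact Real.sqrt_sq (by positivity)

private lemma hasF (c t : ℝ) (ht : -1 < t) :
    HasDerivAt (fun t => c * Real.sqrt ((1 + t) ^ 3)) (c * (3/2 * Real.sqrt (1 + t))) t := by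
  have h1 : (0:ℝ) < 1 + t := by linarith
  have hu : HasDerivAt (fun t : ℝ => (1 + t) ^ 3) (3 * (1 + t) ^ 2) t := by
    simpa using ((hasDerivAt_id t).const_add 1).fun_pow 3
  have hs : HasDerivAt (fun t : ℝ => Real.sqrt ((1 + t) ^ 3))
      (3 * (1 + t) ^ 2 / (2 * Real.sqrt ((1 + t) ^ 3))) t := hu.sqrt (by positivity)
  have h2 : Real.sqrt ((1 + t) ^ 3) = (1 + t) * Real.sqrt (1 + t) := by
    rw [show (1 + t) ^ 3 = (1+t)^2 * (1+t) by ring, Real.sqrt_mul (by positivity),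
      Real.sqrt_sq h1.le]
  have h3 : (0:ℝ) < Real.sqrt (1 + t) := Real.sqrt_pos.2 h1
  have h4 : Real.sqrt (1 + t) ^ 2 = 1 + t := Real.sq_sqrt h1.le
  have heq : 3 * (1 + t) ^ 2 / (2 * Real.sqrt ((1 + t) ^ 3)) = 3/2 * Real.sqrt (1 + t) := by
    rw [h2]; field_simp; nlinarith [h4, h3]
  rw [heq] at hs
  exact hs.const_mul c

private lemma hasG (c t : ℝ) (ht : 0 < t) :
    HasDerivAt (fun t => c * Real.sqrt t * (3 - t)) (c * ((3 - 3*t) / (2 * Real.sqrt t))) t := by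
  have hs : (0:ℝ) < Real.sqrt t := Real.sqrt_pos.2 ht
  have h4 : Real.sqrt t ^ 2 = t := Real.sq_sqrt ht.le
  have h1 : HasDerivAt (fun t : ℝ => c * Real.sqrt t) (c * (1 / (2 * Real.sqrt t))) t :=
    (Real.hasDerivAt_sqrt ht.ne').const_mul c
  have h2 : HasDerivAt (fun t : ℝ => 3 - t) (-1) t := by
    simpa using (hasDerivAt_id t).const_sub 3
  have := h1.fun_mul h2
  have he : c * ((3 - 3*t) / (2 * Real.sqrt t)) = c * (1 / (2 * Real.sqrt t)) * (3 - t) + c * Real.sqrt t * (-1) := by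
    field_simp
    linear_combination 2 * c * h4
  rw [he]; exact this

private lemma hasF' (c t : ℝ) (ht : -1 < t) :
    HasDerivAt (fun t => c * (3/2 * Real.sqrt (1 + t)))
      (c * (3/2) * (1 / (2 * Real.sqrt (1 + t)))) t := by
  have h1 : (0:ℝ) < 1 + t := by linarith
  have hu : HasDerivAt (fun t : ℝ => 1 + t) 1 t := by
    simpa using (hasDerivAt_id t).const_add 1
  have := (hu.sqrt h1.ne').const_mul (c * (3/2))
  have he : (fun t => c * (3/2 * Real.sqrt (1 + t))) = fun y => c * (3/2) * Real.sqrt (1 + y) := by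
    funext y; ring
  rw [he]; exact this

private lemma hasG' (c t : ℝ) (ht : 0 < t) :
    HasDerivAt (fun t => c * (3 - 3*t) / (2 * Real.sqrt t))
      ((c * (-3) * (2 * Real.sqrt t) - c * (3 - 3*t) * (2 * (1 / (2 * Real.sqrt t)))) /
        (2 * Real.sqrt t)^2) t := by
  have hs : (0:ℝ) < Real.sqrt t := Real.sqrt_pos.2 ht
  have hn : HasDerivAt (fun t : ℝ => c * (3 - 3*t)) (c * (-3)) t := by
    have := (((hasDerivAt_id t).const_mul 3).const_sub 3).const_mul c
    simpa using this
  have hd : HasDerivAt (fun t : ℝ => 2 * Real.sqrt t) (2 * (1 / (2 * Real.sqrt t))) t :=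
    (Real.hasDerivAt_sqrt ht.ne').const_mul 2
  exact hn.div hd (by positivity)

theorem tangency_L4_Lpi2 :
    let c : ℝ := 2 / (3 * Real.sqrt 3)
    let f : ℝ → ℝ := fun t => c * Real.sqrt ((1 + t) ^ 3)
    let g : ℝ → ℝ := fun t => c * Real.sqrt t * (3 - t)
    f (1 / 3) = 16 / 27 ∧ g (1 / 3) = 16 / 27 ∧
      deriv f (1 / 3) = deriv g (1 / 3) ∧
      iteratedDeriv 2 f (1 / 3) ≠ iteratedDeriv 2 g (1 / 3) := by
  intro c f g
  have hs0 := sqrt3_pos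
  have hs2 := sqrt3_sq
  have hsne : Real.sqrt 3 ≠ 0 := hs0.ne'
  have hc : c = 2 / (3 * Real.sqrt 3) := rfl
  have hf13 : f (1/3) = 16/27 := by
    show c * Real.sqrt ((1 + 1/3) ^ 3) = 16/27
    have h2 : Real.sqrt ((1 + 1/3 : ℝ) ^ 3) = (1 + 1/3) * Real.sqrt (1 + 1/3) := by
      rw [show ((1:ℝ) + 1/3) ^ 3 = (1 + 1/3)^2 * (1 + 1/3) by ring,
        Real.sqrt_mul (by positivity), Real.sqrt_sq (by norm_num)]
    rw [h2, sqrt_fourthirds, hc]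
    field_simp
    ring
  have hg13 : g (1/3) = 16/27 := by
    show c * Real.sqrt (1/3) * (3 - 1/3) = 16/27
    rw [sqrt_third, hc]
    field_simp
    ring
  have hdf : deriv f (1/3) = 2/3 := by
    rw [(hasF c (1/3) (by norm_num)).deriv, sqrt_fourthirds, hc]
    field_simp
  have hdg : deriv g (1/3) = 2/3 := by
    rw [(hasG c (1/3) (by norm_num)).deriv, sqrt_third, hc]
    field_simp
    linear_combination (-2) * hs2
  have hef : deriv f =ᶠ[nhds (1/3 : ℝ)] (fun t => c * (3/2 * Real.sqrt (1 + t))) := by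
    filter_upwards [Ioi_mem_nhds (show (-1:ℝ) < 1/3 by norm_num)] with t ht
    exact (hasF c t ht).deriv
  have heg : deriv g =ᶠ[nhds (1/3 : ℝ)] (fun t => c * (3 - 3*t) / (2 * Real.sqrt t)) := by
    filter_upwards [Ioi_mem_nhds (show (0:ℝ) < 1/3 by norm_num)] with t ht
    rw [(hasG c t ht).deriv, mul_div_assoc]
  have h2f : iteratedDeriv 2 f (1/3) = 1/4 := by
    rw [iteratedDeriv_succ, iteratedDeriv_one, hef.deriv_eq,
      (hasF' c (1/3) (by norm_num)).deriv, sqrt_fourthirds, hc]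
    field_simp
    linear_combination (-4) * hs2
  have h2g : iteratedDeriv 2 g (1/3) = -2 := by
    rw [iteratedDeriv_succ, iteratedDeriv_one, heg.deriv_eq,
      (hasG' c (1/3) (by norm_num)).deriv, sqrt_third, hc]
    field_simp
    linear_combination (4 * Real.sqrt 3 ^ 2 + 6) * hs2
  exact ⟨hf13, hg13, by rw [hdf, hdg], by rw [h2f, h2g]; norm_num⟩
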